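/- Let α ∈ (0,1], β, ρ₀, K > 0, and let E : [0,ρ₀] → ℝ be a nonnegative absolutely continuous (W^{1,1}) function with E(0) = 0 satisfying ρ^{β-1} E(ρ)^{1-α} ≤ K E'(ρ) for almost every ρ ∈ (0,ρ₀). Then E(ρ) = 0 for all ρ ∈ [0,r], where r^β = max(0, ρ₀^β − K(β/α) E(ρ₀)^α). -/

import Mathlib

open MeasureTheory Set

open Filter Topology

lemma concave_rpow_aux {α a b : ℝ} (hα0 : 0 < α) (hα1 : α ≤ 1) (ha : 0 < a) (hab : a ≤ b) :
    α * b ^ (α - 1) * (b - a) ≤ b ^ α - a ^ α := by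
  have hb : 0 < b := lt_of_lt_of_le ha hab
  have ht0 : 0 < a / b := div_pos ha hb
  have amgm := Real.geom_mean_le_arith_mean2_weighted (w₁ := α) (w₂ := 1 - α) (p₁ := a / b)
    (p₂ := 1) hα0.le (by linarith) ht0.le zero_le_one (by ring)
  rw [Real.one_rpow, mul_one, Real.div_rpow ha.le hb.le] at amgm
  have h2 : b ^ (α - 1) = b ^ α / b := by
    rw [Real.rpow_sub hb, Real.rpow_one]
  have hbα : 0 < b ^ α := Real.rpow_pos_of_pos hb α
  rw [h2]
  have h3 := mul_le_mul_of_nonneg_left amgm hbα.le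
  have hab' : b ^ α * (a ^ α / b ^ α) = a ^ α := by field_simp
  rw [hab'] at h3
  have hbne : b ≠ 0 := hb.ne'
  have h4 : b ^ α * (α * (a / b) + (1 - α) * 1) = α * (b ^ α / b) * a + (1 - α) * b ^ α := by
    field_simp
  rw [h4] at h3
  have h5 : α * (b ^ α / b) * b = α * b ^ α := by field_simp
  nlinarith [h3, h5]

lemma stmt0_aux (α β ρ₀ K : ℝ) (hα0 : 0 < α) (hα1 : α ≤ 1) (hβ : 0 < β) (hρ₀ : 0 < ρ₀)
    (hK : 0 < K) (E E' : ℝ → ℝ)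
    (hE'int : IntegrableOn E' (Ioo 0 ρ₀))
    (hAC : ∀ ρ ∈ Icc (0:ℝ) ρ₀, E ρ = ∫ t in (0:ℝ)..ρ, E' t)
    (hnonneg : ∀ ρ ∈ Icc (0:ℝ) ρ₀, 0 ≤ E ρ)
    (hineq : ∀ᵐ ρ ∂(volume.restrict (Ioo 0 ρ₀)),
      ρ ^ (β - 1) * E ρ ^ (1 - α) ≤ K * E' ρ) :
    ∀ x ∈ Icc (0:ℝ) ρ₀, 0 < x → 0 < E x →
      α / (K * β) * (ρ₀ ^ β - x ^ β) ≤ E ρ₀ ^ α - E x ^ α := by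
  -- integrability
  have hIccInt : IntegrableOn E' (Icc 0 ρ₀) := by
    rwa [integrableOn_Icc_iff_integrableOn_Ioo]
  have hInt : ∀ u v : ℝ, u ∈ Icc (0:ℝ) ρ₀ → v ∈ Icc (0:ℝ) ρ₀ →
      IntervalIntegrable E' volume u v := by
    intro u v hu hv
    constructor
    · exact hIccInt.mono_set (fun t ht => ⟨hu.1.trans ht.1.le, ht.2.trans hv.2⟩)
    · exact hIccInt.mono_set (fun t ht => ⟨hv.1.trans ht.1.le, ht.2.trans hu.2⟩)
  -- increments
  have hdiff : ∀ u v : ℝ, u ∈ Icc (0:ℝ) ρ₀ → v ∈ Icc (0:ℝ) ρ₀ →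
      E v - E u = ∫ t in u..v, E' t := by
    intro u v hu hv
    have h := intervalIntegral.integral_add_adjacent_intervals
      (hInt 0 u (left_mem_Icc.2 hρ₀.le) hu) (hInt u v hu hv)
    rw [hAC u hu, hAC v hv]
    linarith
  -- the key inequality, transferred to the closed interval
  have hineq' : ∀ᵐ t ∂(volume.restrict (Icc (0:ℝ) ρ₀)),
      t ^ (β - 1) * E t ^ (1 - α) ≤ K * E' t := by
    rwa [Measure.restrict_congr_set Ioo_ae_eq_Icc] at hineq
  have hmem' : ∀ᵐ t ∂(volume.restrict (Icc (0:ℝ) ρ₀)), t ∈ Ioo (0:ℝ) ρ₀ := by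
    rw [← Measure.restrict_congr_set (Ioo_ae_eq_Icc (α := ℝ) (a := 0) (b := ρ₀))]
    exact ae_restrict_mem measurableSet_Ioo
  have hE'pos : ∀ᵐ t ∂(volume.restrict (Icc (0:ℝ) ρ₀)), 0 ≤ E' t := by
    filter_upwards [hineq', hmem'] with t h1 h2
    have ht0 : (0:ℝ) ≤ t ^ (β - 1) := Real.rpow_nonneg h2.1.le _
    have hE : 0 ≤ E t := hnonneg t ⟨h2.1.le, h2.2.le⟩
    have : (0:ℝ) ≤ t ^ (β - 1) * E t ^ (1 - α) :=
      mul_nonneg ht0 (Real.rpow_nonneg hE _)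
    nlinarith
  -- monotonicity
  have mono : ∀ u v : ℝ, u ∈ Icc (0:ℝ) ρ₀ → v ∈ Icc (0:ℝ) ρ₀ → u ≤ v → E u ≤ E v := by
    intro u v hu hv huv
    have h0 : 0 ≤ ∫ t in u..v, E' t := by
      apply intervalIntegral.integral_nonneg_of_ae_restrict huv
      exact ae_restrict_of_ae_restrict_of_subset
        (Icc_subset_Icc hu.1 hv.2) hE'pos
    have := hdiff u v hu hv
    linarith
  -- continuity
  have hEcont : ContinuousOn E (Icc 0 ρ₀) := by
    have hprim : ContinuousOn (fun x => ∫ t in (0:ℝ)..x, E' t) (Icc 0 ρ₀) := by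
      have := intervalIntegral.continuousOn_primitive_interval
        (a := 0) (b := ρ₀) (μ := volume) (f := E') (by rwa [uIcc_of_le hρ₀.le])
      rwa [uIcc_of_le hρ₀.le] at this
    exact hprim.congr hAC
  -- step inequality
  have stepC : ∀ y z : ℝ, y ∈ Icc (0:ℝ) ρ₀ → z ∈ Icc (0:ℝ) ρ₀ → 0 < y → y ≤ z →
      E y ^ (1 - α) / K * ((z ^ β - y ^ β) / β) ≤ E z - E y := by
    intro y z hy hz hy0 hyz
    rw [hdiff y z hy hz]
    set c₀ := E y ^ (1 - α) / K with hc₀def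
    have hc₀ : 0 ≤ c₀ := div_nonneg (Real.rpow_nonneg (hnonneg y hy) _) hK.le
    have hcont1 : ContinuousOn (fun t : ℝ => c₀ * t ^ (β - 1)) (uIcc y z) := by
      rw [uIcc_of_le hyz]
      intro t ht
      have ht0 : t ≠ 0 := (lt_of_lt_of_le hy0 ht.1).ne'
      exact ((Real.continuousAt_rpow_const t (β - 1) (Or.inl ht0)).const_smul
        c₀).continuousWithinAt
    have hint1 : IntervalIntegrable (fun t : ℝ => c₀ * t ^ (β - 1)) volume y z :=
      hcont1.intervalIntegrable
    have hmono_int : ∫ t in y..z, c₀ * t ^ (β - 1) ≤ ∫ t in y..z, E' t := by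
      apply intervalIntegral.integral_mono_ae_restrict hyz hint1 (hInt y z hy hz)
      have hsub : Icc y z ⊆ Icc (0:ℝ) ρ₀ := Icc_subset_Icc hy.1 hz.2
      filter_upwards [ae_restrict_of_ae_restrict_of_subset hsub hineq',
        ae_restrict_mem measurableSet_Icc] with t h1 h2
      have htpos : 0 < t := lt_of_lt_of_le hy0 h2.1
      have ht1 : 0 ≤ t ^ (β - 1) := Real.rpow_nonneg htpos.le _
      have hEt : E y ≤ E t := mono y t hy (hsub h2) h2.1
      have h3 : E y ^ (1 - α) ≤ E t ^ (1 - α) :=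
        Real.rpow_le_rpow (hnonneg y hy) hEt (by linarith)
      have h4 : t ^ (β - 1) * E y ^ (1 - α) ≤ K * E' t :=
        le_trans (by nlinarith) h1
      rw [hc₀def]
      rw [div_mul_eq_mul_div, div_le_iff₀ hK]
      nlinarith
    refine le_trans (le_of_eq ?_) hmono_int
    rw [intervalIntegral.integral_const_mul, integral_rpow (Or.inl (by linarith))]
    rw [sub_add_cancel]
  -- main inequality via continuous induction
  intro x hx hx0 hEx
  set c := α / (K * β) with hcdef
  have hcpos : 0 < c := div_pos hα0 (mul_pos hK hβ)
  have hρ₀mem : ρ₀ ∈ Icc (0:ℝ) ρ₀ := right_mem_Icc.2 hρ₀.le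
  have key : ∀ ε : ℝ, 0 < ε → ε < 1 →
      (1 - ε) * c * (ρ₀ ^ β - x ^ β) ≤ E ρ₀ ^ α - E x ^ α := by
    intro ε hε0 hε1
    set s : Set ℝ := {y | (1 - ε) * c * (y ^ β - x ^ β) ≤ E y ^ α - E x ^ α} with hsdef
    have hrpowcont : Continuous (fun u : ℝ => u ^ α) := by
      rw [continuous_iff_continuousAt]
      intro u
      exact Real.continuousAt_rpow_const u α (Or.inr hα0.le)
    have hsub : Icc x ρ₀ ⊆ s := by
      apply IsClosed.Icc_subset_of_forall_exists_gt
      · -- closedness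
        have hfc : ContinuousOn
            (fun y : ℝ => ((1 - ε) * c * (y ^ β - x ^ β), E y ^ α - E x ^ α))
            (Icc x ρ₀) := by
          apply ContinuousOn.prodMk
          · apply ContinuousOn.mul continuousOn_const
            apply ContinuousOn.sub _ continuousOn_const
            intro t ht
            exact (Real.continuousAt_rpow_const t β
              (Or.inl (lt_of_lt_of_le hx0 ht.1).ne')).continuousWithinAt
          · exact ((hrpowcont.comp_continuousOn
              (hEcont.mono (Icc_subset_Icc hx.1 le_rfl))).sub continuousOn_const)
        have := hfc.preimage_isClosed_of_isClosed isClosed_Icc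
          (isClosed_le continuous_fst continuous_snd)
        have hset : s ∩ Icc x ρ₀ = Icc x ρ₀ ∩
            ((fun y : ℝ => ((1 - ε) * c * (y ^ β - x ^ β), E y ^ α - E x ^ α)) ⁻¹'
              {p : ℝ × ℝ | p.1 ≤ p.2}) := by
          ext t; simp [hsdef, and_comm]
        rwa [hset]
      · simp [hsdef]
      · rintro y ⟨hys, hyI⟩ v hv
        have hy0 : 0 < y := lt_of_lt_of_le hx0 hyI.1
        have hyIcc : y ∈ Icc (0:ℝ) ρ₀ := ⟨hy0.le, hyI.2.le⟩
        have hEy : 0 < E y := lt_of_lt_of_le hEx (mono x y hx hyIcc hyI.1)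
        -- find z
        have hTE : Tendsto E (𝓝[Ioc y ρ₀] y) (𝓝 (E y)) :=
          ((hEcont y hyIcc).mono (fun t (ht : t ∈ Ioc y ρ₀) =>
            ⟨hy0.le.trans ht.1.le, ht.2⟩ : Ioc y ρ₀ ⊆ Icc 0 ρ₀)).tendsto
        have hTfun : ContinuousAt (fun u : ℝ => (E y / u) ^ (1 - α)) (E y) := by
          apply ContinuousAt.rpow_const
          · exact continuousAt_const.div continuousAt_id hEy.ne'
          · left; simp [div_self hEy.ne']
        have hT : Tendsto (fun z => (E y / E z) ^ (1 - α)) (𝓝[Ioc y ρ₀] y) (𝓝 1) := by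
          have := hTfun.tendsto.comp hTE
          simpa [div_self hEy.ne', Function.comp_def] using this
        have hnb : (𝓝[Ioc y ρ₀] y).NeBot := by
          apply mem_closure_iff_nhdsWithin_neBot.mp
          rw [closure_Ioc hyI.2.ne]
          exact ⟨le_rfl, hyI.2.le⟩
        have ev1 : ∀ᶠ z in 𝓝[Ioc y ρ₀] y, 1 - ε < (E y / E z) ^ (1 - α) :=
          hT.eventually (eventually_gt_nhds (by linarith))
        have ev2 : ∀ᶠ z in 𝓝[Ioc y ρ₀] y, z < v :=
          eventually_nhdsWithin_of_eventually_nhds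
            (Filter.Tendsto.eventually_lt_const hv tendsto_id)
        have ev3 : ∀ᶠ z in 𝓝[Ioc y ρ₀] y, z ∈ Ioc y ρ₀ :=
          eventually_mem_nhdsWithin
        obtain ⟨z, hz1, hz2, hz3⟩ := (ev1.and (ev2.and ev3)).exists
        have hzIcc : z ∈ Icc (0:ℝ) ρ₀ := ⟨(hy0.trans hz3.1).le, hz3.2⟩
        have hEyz : E y ≤ E z := mono y z hyIcc hzIcc hz3.1.le
        have hEz : 0 < E z := lt_of_lt_of_le hEy hEyz
        refine ⟨z, ?_, hz3.1, hz2.le⟩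
        -- z ∈ s
        have step := stepC y z hyIcc hzIcc hy0 hz3.1.le
        have conc := concave_rpow_aux hα0 hα1 hEy hEyz
        have hzy : 0 ≤ z ^ β - y ^ β := by
          have := Real.rpow_le_rpow hy0.le hz3.1.le hβ.le
          linarith
        -- combine
        have hfac : α * E z ^ (α - 1) * (E y ^ (1 - α) / K * ((z ^ β - y ^ β) / β))
            = c * ((E y / E z) ^ (1 - α)) * (z ^ β - y ^ β) := by
          rw [Real.div_rpow hEy.le hEz.le]
          have h7 : E z ^ (α - 1) = (E z ^ (1 - α))⁻¹ := by
            rw [show α - 1 = -(1 - α) by ring, Real.rpow_neg hEz.le]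
          rw [h7, hcdef]
          have h8 : E z ^ (1 - α) ≠ 0 := (Real.rpow_pos_of_pos hEz _).ne'
          field_simp
        have hmain1 : c * ((E y / E z) ^ (1 - α)) * (z ^ β - y ^ β)
            ≤ E z ^ α - E y ^ α := by
          rw [← hfac]
          calc α * E z ^ (α - 1) * (E y ^ (1 - α) / K * ((z ^ β - y ^ β) / β))
              ≤ α * E z ^ (α - 1) * (E z - E y) := by
                apply mul_le_mul_of_nonneg_left step
                exact mul_nonneg hα0.le (Real.rpow_nonneg hEz.le _)
            _ ≤ E z ^ α - E y ^ α := conc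
        have hmain2 : (1 - ε) * c * (z ^ β - y ^ β)
            ≤ c * ((E y / E z) ^ (1 - α)) * (z ^ β - y ^ β) := by
          apply mul_le_mul_of_nonneg_right _ hzy
          nlinarith [hz1]
        have hys' : (1 - ε) * c * (y ^ β - x ^ β) ≤ E y ^ α - E x ^ α := hys
        show (1 - ε) * c * (z ^ β - x ^ β) ≤ E z ^ α - E x ^ α
        nlinarith [hmain1, hmain2]
    have := hsub (right_mem_Icc.2 hx.2)
    exact this
  -- take ε → 0
  by_contra hcon
  push_neg at hcon
  set A := c * (ρ₀ ^ β - x ^ β) with hA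
  set B := E ρ₀ ^ α - E x ^ α with hB
  have hBnn : 0 ≤ B := by
    have := Real.rpow_le_rpow (hnonneg x hx) (mono x ρ₀ hx hρ₀mem hx.2) hα0.le
    simp only [hB]; linarith
  have hBA : B < A := hcon
  have hApos : 0 < A := lt_of_le_of_lt hBnn hBA
  have hε0 : 0 < (A - B) / (2 * A) := div_pos (by linarith) (by linarith)
  have hε1 : (A - B) / (2 * A) < 1 := by
    rw [div_lt_one (by linarith)]; linarith
  have := key _ hε0 hε1
  rw [mul_assoc, ← hA] at this
  have h9 : (1 - (A - B) / (2 * A)) * A = A - (A - B) / 2 := by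
    field_simp
  rw [h9] at this
  linarith

theorem stmt0 (α β ρ₀ K : ℝ) (hα : α ∈ Ioc (0:ℝ) 1) (hβ : 0 < β) (hρ₀ : 0 < ρ₀)
    (hK : 0 < K) (E E' : ℝ → ℝ)
    (hE'int : IntegrableOn E' (Ioo 0 ρ₀))
    (hAC : ∀ ρ ∈ Icc (0:ℝ) ρ₀, E ρ = ∫ t in (0:ℝ)..ρ, E' t)
    (hnonneg : ∀ ρ ∈ Icc (0:ℝ) ρ₀, 0 ≤ E ρ)
    (hE0 : E 0 = 0)
    (hineq : ∀ᵐ ρ ∂(volume.restrict (Ioo 0 ρ₀)),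
      ρ ^ (β - 1) * E ρ ^ (1 - α) ≤ K * E' ρ)
    (r : ℝ) (hr0 : 0 ≤ r)
    (hr : r ^ β = max 0 (ρ₀ ^ β - K * (β / α) * E ρ₀ ^ α)) :
    ∀ ρ ∈ Icc (0:ℝ) r, E ρ = 0 := by
  obtain ⟨hα0, hα1⟩ := hα
  have main := stmt0_aux α β ρ₀ K hα0 hα1 hβ hρ₀ hK E E' hE'int hAC hnonneg hineq
  -- conclusion
  have hrle : r ≤ ρ₀ := by
    by_contra hlt
    push_neg at hlt
    have h1 : ρ₀ ^ β < r ^ β := Real.rpow_lt_rpow hρ₀.le hlt hβ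
    have h2 : 0 ≤ K * (β / α) * E ρ₀ ^ α :=
      mul_nonneg (mul_nonneg hK.le (div_nonneg hβ.le hα0.le))
        (Real.rpow_nonneg (hnonneg ρ₀ (right_mem_Icc.2 hρ₀.le)) _)
    have h3 : 0 ≤ ρ₀ ^ β := Real.rpow_nonneg hρ₀.le _
    rw [hr] at h1
    rcases max_cases 0 (ρ₀ ^ β - K * (β / α) * E ρ₀ ^ α) with ⟨he, _⟩ | ⟨he, _⟩ <;>
      rw [he] at h1 <;> linarith
  intro ρ hρ
  rcases hρ.1.eq_or_lt with h0 | h0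
  · rw [← h0]; exact hE0
  have hρρ₀ : ρ ≤ ρ₀ := hρ.2.trans hrle
  by_contra hne
  have hEρ : 0 < E ρ := lt_of_le_of_ne (hnonneg ρ ⟨hρ.1, hρρ₀⟩) (Ne.symm hne)
  have hmain := main ρ ⟨hρ.1, hρρ₀⟩ h0 hEρ
  have h1 : ρ ^ β ≤ r ^ β := Real.rpow_le_rpow hρ.1 hρ.2 hβ.le
  have hρpos : 0 < ρ ^ β := Real.rpow_pos_of_pos h0 _
  have hEρα : 0 < E ρ ^ α := Real.rpow_pos_of_pos hEρ _
  -- from hmain: ρ₀^β − ρ^β ≤ K*(β/α)*(E ρ₀^α − E ρ^α)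
  have h2 : ρ₀ ^ β - ρ ^ β ≤ K * (β / α) * E ρ₀ ^ α - K * (β / α) * E ρ ^ α := by
    have hc'pos : (0:ℝ) < K * (β / α) := mul_pos hK (div_pos hβ hα0)
    have hinv : K * (β / α) * (α / (K * β)) = 1 := by field_simp
    have hm := mul_le_mul_of_nonneg_left hmain hc'pos.le
    rw [← mul_assoc, hinv, one_mul, mul_sub] at hm
    exact hm
  rw [hr] at h1
  rcases max_cases 0 (ρ₀ ^ β - K * (β / α) * E ρ₀ ^ α) with ⟨he, hle⟩ | ⟨he, _⟩ <;>
    rw [he] at h1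
  · linarith
  · have h3 : 0 < K * (β / α) * E ρ ^ α :=
      mul_pos (mul_pos hK (div_pos hβ hα0)) hEρα
    linarith
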